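/- The set of homotopy rank types (A, B) of formal dimension fd(A, B) = 15 is finite and has exactly 58 elements. -/

import Mathlib

/-- `(A, B)` is a homotopy rank type: every element of `A` is at least `1`,
every element of `B` is at least `2`, and the strong arithmetic condition of
Friedlander–Halperin holds: for every sub-multiset `A' ≤ A` there is a
sub-multiset `B' ≤ B` of cardinality at least that of `A'` such that every
`β ∈ B'` is of the form `β = ∑ c x * x` with `c` supported on `A'` and
`∑ c x ≥ 2`. -/
def IsHomotopyRankType (A B : Multiset ℕ) : Prop :=
  (∀ a ∈ A, 1 ≤ a) ∧ (∀ b ∈ B, 2 ≤ b) ∧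
  ∀ A' : Multiset ℕ, A' ≤ A → ∃ B' : Multiset ℕ, B' ≤ B ∧
    Multiset.card A' ≤ Multiset.card B' ∧
    ∀ β ∈ B', ∃ c : ℕ → ℕ, (∀ x, x ∉ A' → c x = 0) ∧
      2 ≤ ∑ x ∈ A'.toFinset, c x ∧ β = ∑ x ∈ A'.toFinset, c x * x

/-- The formal dimension of a homotopy rank type `(A, B)`:
`∑_{b ∈ B} (2b - 1) - ∑_{a ∈ A} (2a - 1)`. -/
def formalDim (A B : Multiset ℕ) : ℤ :=
  (B.map (fun b => 2 * (b : ℤ) - 1)).sum - (A.map (fun a => 2 * (a : ℤ) - 1)).sum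




namespace CFD


lemma mapsub {M : Multiset ℕ} {c : ℕ} (h : ∀ x ∈ M, c ≤ x) :
    (M.map (fun x => x - c)).sum + c * Multiset.card M = M.sum := by
  induction M using Multiset.induction_on with
  | empty => simp
  | cons x M ih =>
    have hx := h x (Multiset.mem_cons_self _ _)
    have := ih (fun y hy => h y (Multiset.mem_cons_of_mem hy))
    simp only [Multiset.map_cons, Multiset.sum_cons, Multiset.card_cons, Nat.mul_succ]
    omega

lemma card_le_sum {M : Multiset ℕ} (h : ∀ x ∈ M, 1 ≤ x) : Multiset.card M ≤ M.sum := by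
  have := mapsub (c := 1) h; omega

lemma mul_le_sum {M : Multiset ℕ} {t : ℕ} (h : ∀ x ∈ M, t ≤ x) :
    Multiset.card M * t ≤ M.sum := by
  induction M using Multiset.induction_on with
  | empty => simp
  | cons x M ih =>
    have hx := h x (Multiset.mem_cons_self _ _)
    have := ih (fun y hy => h y (Multiset.mem_cons_of_mem hy))
    simp only [Multiset.sum_cons, Multiset.card_cons, Nat.succ_mul, Nat.add_mul]
    omega

def kSumsC (s : Finset ℕ) (N : ℕ) : ℕ → Finset ℕ
  | 0 => {0}
  | k+1 => ((kSumsC s N k).biUnion (fun b => s.image (b + ·))).filter (· ≤ N)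

lemma mem_kSumsC {s : Finset ℕ} {N k β : ℕ} (hβ : β ≤ N) :
    β ∈ kSumsC s N k ↔
      ∃ C : Multiset ℕ, (∀ x ∈ C, x ∈ s) ∧ Multiset.card C = k ∧ C.sum = β := by
  induction k generalizing β with
  | zero =>
    simp only [kSumsC, Finset.mem_singleton]
    constructor
    · rintro rfl; exact ⟨0, by simp⟩
    · rintro ⟨C, h1, h2, h3⟩
      rw [Multiset.card_eq_zero] at h2; subst h2; simpa using h3.symm
  | succ k ih =>
    simp only [kSumsC, Finset.mem_filter, Finset.mem_biUnion, Finset.mem_image]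
    constructor
    · rintro ⟨⟨b, hb, x, hx, rfl⟩, -⟩
      obtain ⟨C, hC, hcard, hsum⟩ := (ih (le_trans (Nat.le_add_right b x) hβ)).mp hb
      exact ⟨x ::ₘ C, by
        intro y hy
        rcases Multiset.mem_cons.mp hy with rfl | hy
        · exact hx
        · exact hC y hy, by simp [hcard], by simp [hsum]; omega⟩
    · rintro ⟨C, hC, hcard, hsum⟩
      have hC0 : C ≠ 0 := by
        intro h; rw [h] at hcard; simp at hcard
      obtain ⟨x, hx⟩ := Multiset.exists_mem_of_ne_zero hC0
      have hce : x ::ₘ C.erase x = C := Multiset.cons_erase hx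
      have hsum' : (C.erase x).sum + x = β := by
        rw [← hsum, ← hce]; simp [Multiset.sum_cons]; ring
      refine ⟨⟨(C.erase x).sum, ?_, x, hC x hx, by omega⟩, hβ⟩
      refine (ih (by omega)).mpr ⟨C.erase x, fun y hy => hC y (Multiset.mem_of_mem_erase hy), ?_, rfl⟩
      rw [Multiset.card_erase_of_mem hx, hcard]; rfl

def Rep (s : Finset ℕ) (β : ℕ) : Prop := ∃ k ∈ Finset.Icc 2 β, β ∈ kSumsC s β k

instance (s : Finset ℕ) : DecidablePred (Rep s) := fun β => by unfold Rep; infer_instance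

lemma rep_iff_C {s : Finset ℕ} (hs : ∀ x ∈ s, 1 ≤ x) (β : ℕ) :
    Rep s β ↔ ∃ C : Multiset ℕ, (∀ x ∈ C, x ∈ s) ∧ 2 ≤ Multiset.card C ∧ C.sum = β := by
  constructor
  · rintro ⟨k, hk, hmem⟩
    obtain ⟨C, h1, h2, h3⟩ := (mem_kSumsC le_rfl).mp hmem
    simp only [Finset.mem_Icc] at hk
    exact ⟨C, h1, by omega, h3⟩
  · rintro ⟨C, h1, h2, h3⟩
    refine ⟨Multiset.card C, ?_, (mem_kSumsC le_rfl).mpr ⟨C, h1, rfl, h3⟩⟩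
    have : Multiset.card C ≤ C.sum := card_le_sum (fun x hx => hs x (h1 x hx))
    simp only [Finset.mem_Icc]; omega


lemma count_sums (C : Multiset ℕ) (T : Finset ℕ) (hC : ∀ x ∈ C, x ∈ T) :
    (∑ x ∈ T, C.count x = Multiset.card C) ∧ (∑ x ∈ T, C.count x * x = C.sum) := by
  induction C using Multiset.induction_on with
  | empty => simp
  | cons y C ih =>
    have hy : y ∈ T := hC y (Multiset.mem_cons_self _ _)
    obtain ⟨ih1, ih2⟩ := ih (fun x hx => hC x (Multiset.mem_cons_of_mem hx))
    constructor
    · calc ∑ x ∈ T, (y ::ₘ C).count x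
          = ∑ x ∈ T, (C.count x + if x = y then 1 else 0) := by
            apply Finset.sum_congr rfl; intro x hx; rw [Multiset.count_cons]
        _ = Multiset.card C + ∑ x ∈ T, (if x = y then 1 else 0) := by
            rw [Finset.sum_add_distrib, ih1]
        _ = Multiset.card (y ::ₘ C) := by
            rw [Finset.sum_ite_eq' T y (fun _ => 1), if_pos hy]; simp
    · calc ∑ x ∈ T, (y ::ₘ C).count x * x
          = ∑ x ∈ T, (C.count x * x + if x = y then x else 0) := by
            apply Finset.sum_congr rfl; intro x hx
            rw [Multiset.count_cons, Nat.add_mul]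
            congr 1
            split <;> simp
        _ = C.sum + ∑ x ∈ T, (if x = y then x else 0) := by
            rw [Finset.sum_add_distrib, ih2]
        _ = (y ::ₘ C).sum := by
            rw [Finset.sum_ite_eq' T y (fun x => x), if_pos hy]; simp [add_comm]

lemma exc_iff_C (A' : Multiset ℕ) (β : ℕ) :
    (∃ c : ℕ → ℕ, (∀ x, x ∉ A' → c x = 0) ∧
      2 ≤ ∑ x ∈ A'.toFinset, c x ∧ β = ∑ x ∈ A'.toFinset, c x * x)
    ↔ ∃ C : Multiset ℕ, (∀ x ∈ C, x ∈ A'.toFinset) ∧ 2 ≤ Multiset.card C ∧ C.sum = β := by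
  constructor
  · rintro ⟨c, hc0, hc2, rfl⟩
    refine ⟨A'.toFinset.val.bind (fun x => Multiset.replicate (c x) x), ?_, ?_, ?_⟩
    · intro x hx
      obtain ⟨y, hy, hx⟩ := Multiset.mem_bind.mp hx
      rw [Multiset.eq_of_mem_replicate hx]
      exact hy
    · rw [Multiset.card_bind]
      convert hc2 using 1
      simp [Finset.sum, Multiset.card_replicate]
    · rw [Multiset.sum_bind]
      simp [Finset.sum, Multiset.sum_replicate, smul_eq_mul]
  · rintro ⟨C, h1, h2, h3⟩
    obtain ⟨e1, e2⟩ := count_sums C A'.toFinset h1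
    refine ⟨fun x => C.count x, ?_, ?_, ?_⟩
    · intro x hx
      rw [Multiset.count_eq_zero]
      intro hmem
      exact hx (Multiset.mem_toFinset.mp (h1 x hmem))
    · show 2 ≤ ∑ x ∈ A'.toFinset, C.count x
      omega
    · show β = ∑ x ∈ A'.toFinset, C.count x * x
      omega


end CFD


section T3
open CFD

def Check (A B : Multiset ℕ) : Prop :=
  (∀ a ∈ A, 1 ≤ a) ∧ (∀ b ∈ B, 2 ≤ b) ∧
  ∀ S ∈ A.toFinset.powerset,
    Multiset.card (A.filter (· ∈ S)) ≤ Multiset.card (B.filter (fun β => Rep S β))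

instance (A B : Multiset ℕ) : Decidable (Check A B) := by unfold Check; infer_instance

lemma check_iff (A B : Multiset ℕ) : IsHomotopyRankType A B ↔ Check A B := by
  constructor
  · rintro ⟨h1, h2, h3⟩
    refine ⟨h1, h2, fun S hS => ?_⟩
    have hs : ∀ x ∈ S, 1 ≤ x := fun x hx =>
      h1 x (Multiset.mem_toFinset.mp (Finset.mem_powerset.mp hS hx))
    obtain ⟨B', hB'le, hcard, hrep⟩ := h3 (A.filter (· ∈ S)) (Multiset.filter_le _ _)
    refine hcard.trans (Multiset.card_le_card (Multiset.le_filter.mpr ⟨hB'le, fun β hβ => ?_⟩))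
    rw [rep_iff_C hs]
    obtain ⟨C, hC1, hC2, hC3⟩ := (exc_iff_C _ β).mp (hrep β hβ)
    refine ⟨C, fun x hx => ?_, hC2, hC3⟩
    have := Multiset.mem_toFinset.mp (hC1 x hx)
    exact (Multiset.mem_filter.mp this).2
  · rintro ⟨h1, h2, h3⟩
    refine ⟨h1, h2, fun A' hA' => ?_⟩
    have hmem : ∀ x ∈ A', x ∈ A := fun x hx => Multiset.mem_of_le hA' hx
    have hS : A'.toFinset ∈ A.toFinset.powerset :=
      Finset.mem_powerset.mpr (fun x hx =>
        Multiset.mem_toFinset.mpr (hmem x (Multiset.mem_toFinset.mp hx)))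
    have hkey := h3 A'.toFinset hS
    refine ⟨B.filter (fun β => Rep A'.toFinset β), Multiset.filter_le _ _,
      le_trans ?_ hkey, fun β hβ => ?_⟩
    · apply Multiset.card_le_card
      rw [Multiset.le_filter]
      exact ⟨hA', fun x hx => Multiset.mem_toFinset.mpr hx⟩
    · have hrep := (Multiset.mem_filter.mp hβ).2
      rw [exc_iff_C]
      have hs : ∀ x ∈ A'.toFinset, 1 ≤ x := fun x hx =>
        h1 x (hmem x (Multiset.mem_toFinset.mp hx))
      exact (rep_iff_C hs β).mp hrep

lemma countLemma {A B : Multiset ℕ} (h : Check A B) (t : ℕ) :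
    Multiset.card (A.filter (t ≤ ·)) ≤ Multiset.card (B.filter (fun b => 2 * t ≤ b)) := by
  obtain ⟨h1, h2, h3⟩ := h
  have hS : A.toFinset.filter (t ≤ ·) ∈ A.toFinset.powerset :=
    Finset.mem_powerset.mpr (Finset.filter_subset _ _)
  have hkey := h3 _ hS
  have e1 : A.filter (· ∈ A.toFinset.filter (t ≤ ·)) = A.filter (t ≤ ·) := by
    apply Multiset.filter_congr
    intro x hx
    simp [Finset.mem_filter, Multiset.mem_toFinset, hx]
  rw [e1] at hkey
  refine hkey.trans (Multiset.card_le_card (Multiset.monotone_filter_right _ ?_))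
  intro β hβ
  have hs : ∀ x ∈ A.toFinset.filter (t ≤ ·), 1 ≤ x := fun x hx =>
    h1 x (Multiset.mem_toFinset.mp (Finset.mem_filter.mp hx).1)
  obtain ⟨C, hC1, hC2, hC3⟩ := (rep_iff_C hs β).mp hβ
  have : Multiset.card C * t ≤ C.sum :=
    mul_le_sum (fun x hx => (Finset.mem_filter.mp (hC1 x hx)).2)
  calc 2 * t ≤ Multiset.card C * t := Nat.mul_le_mul_right t hC2
    _ ≤ C.sum := this
    _ = β := hC3

end T3

section T4
open CFD

lemma lag1 (M : Multiset ℕ) (c T : ℕ) (hT : ∀ x ∈ M, x ≤ T) :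
    (M.map (fun x => x - c)).sum =
      ∑ t ∈ Finset.Icc (c+1) T, Multiset.card (M.filter (t ≤ ·)) := by
  induction M using Multiset.induction_on with
  | empty => simp
  | cons x M ih =>
    have hx := hT x (Multiset.mem_cons_self _ _)
    have ihh := ih (fun y hy => hT y (Multiset.mem_cons_of_mem hy))
    simp only [Multiset.map_cons, Multiset.sum_cons, Multiset.filter_cons]
    have hcards : ∀ t, Multiset.card ((if t ≤ x then {x} else 0) + M.filter (t ≤ ·))
        = (if t ≤ x then 1 else 0) + Multiset.card (M.filter (t ≤ ·)) := by
      intro t; split <;> simp [add_comm]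
    rw [Finset.sum_congr rfl (fun t _ => hcards t), Finset.sum_add_distrib, ← ihh]
    congr 1
    rw [Finset.sum_boole]
    have he : Finset.filter (fun t => t ≤ x) (Finset.Icc (c+1) T) = Finset.Icc (c+1) x := by
      ext t; simp only [Finset.mem_filter, Finset.mem_Icc]; omega
    rw [he, Nat.card_Icc]
    simp only [Nat.cast_id]
    omega

lemma lag2 (K : ℕ) (f : ℕ → ℕ) :
    ∑ t ∈ Finset.Icc 3 (2*K), f t = ∑ s ∈ Finset.Icc 2 K, (f (2*s-1) + f (2*s)) := by
  induction K with
  | zero => simp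
  | succ K ih =>
    rcases Nat.eq_zero_or_pos K with rfl | hK
    · rw [show (2*(0+1)) = 2 from rfl, Finset.Icc_eq_empty (by omega),
        Finset.Icc_eq_empty (by omega)]
      simp
    · have h1 : 2 * (K + 1) = (2 * K + 1) + 1 := by ring
      rw [h1, Finset.sum_Icc_succ_top (by omega), Finset.sum_Icc_succ_top (by omega),
        Finset.sum_Icc_succ_top (by omega : 2 ≤ K + 1), ih]
      have e1 : 2 * (K+1) - 1 = 2*K+1 := by omega
      have e2 : 2 * (K+1) = 2*K+1+1 := by omega
      rw [e1, e2]
      ring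

lemma boundLemma {A B : Multiset ℕ} (h : Check A B)
    (hnat : 2 * B.sum + Multiset.card A = 15 + 2 * A.sum + Multiset.card B) :
    A.sum ≤ 7 ∧ B.sum ≤ 14 := by
  have h1 := h.1
  have h2 := h.2.1
  have hnm : Multiset.card A ≤ Multiset.card B := by
    have := countLemma h 1
    rwa [Multiset.filter_eq_self.mpr h1,
      Multiset.filter_eq_self.mpr (by simpa using h2)] at this
  set K := A.sum with hK
  have hKA : ∀ a ∈ A, a ≤ K := fun a ha => Multiset.single_le_sum (fun x _ => Nat.zero_le x) a ha
  set T' := max (2*K) B.sum with hT'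
  have hTB : ∀ b ∈ B, b ≤ T' := fun b hb =>
    le_trans (Multiset.single_le_sum (fun x _ => Nat.zero_le x) b hb) (le_max_right _ _)
  have star : 2 * (A.map (fun x => x - 1)).sum ≤ (B.map (fun x => x - 2)).sum := by
    calc 2 * (A.map (fun x => x - 1)).sum
        = 2 * ∑ s ∈ Finset.Icc 2 K, Multiset.card (A.filter (s ≤ ·)) := by
          rw [lag1 A 1 K hKA]
      _ = ∑ s ∈ Finset.Icc 2 K, 2 * Multiset.card (A.filter (s ≤ ·)) := by
          rw [Finset.mul_sum]
      _ ≤ ∑ s ∈ Finset.Icc 2 K, (Multiset.card (B.filter (2*s-1 ≤ ·))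
            + Multiset.card (B.filter (2*s ≤ ·))) := by
          apply Finset.sum_le_sum
          intro s _
          have c1 : Multiset.card (A.filter (s ≤ ·))
              ≤ Multiset.card (B.filter (fun b => 2*s ≤ b)) := countLemma h s
          have c2 : Multiset.card (B.filter (fun b => 2*s ≤ b))
              ≤ Multiset.card (B.filter (2*s-1 ≤ ·)) := by
            apply Multiset.card_le_card
            apply Multiset.monotone_filter_right
            intro b hb
            omega
          omega
      _ = ∑ t ∈ Finset.Icc 3 (2*K), Multiset.card (B.filter (t ≤ ·)) := by
          rw [lag2 K (fun t => Multiset.card (B.filter (t ≤ ·)))]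
      _ ≤ ∑ t ∈ Finset.Icc 3 T', Multiset.card (B.filter (t ≤ ·)) := by
          apply Finset.sum_le_sum_of_subset
          apply Finset.Icc_subset_Icc_right (le_max_left _ _)
      _ = (B.map (fun x => x - 2)).sum := (lag1 B 2 T' hTB).symm
  have eA := mapsub (c := 1) h1
  have eB := mapsub (c := 2) h2
  omega

end T4

section T5
open CFD

def Pf : ℕ → ℕ → ℕ → List (Multiset ℕ)
  | 0, _, _ => [0]
  | f+1, lo, s =>
      0 :: (List.range (s+1)).flatMap
        (fun x => if lo ≤ x then (Pf f x (s - x)).map (x ::ₘ ·) else [])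

lemma Pf_complete : ∀ (f lo s : ℕ) (M : Multiset ℕ), 1 ≤ lo → (∀ x ∈ M, lo ≤ x) →
    M.sum ≤ s → Multiset.card M ≤ f → M ∈ Pf f lo s := by
  intro f
  induction f with
  | zero =>
    intro lo s M _ _ _ hcard
    interval_cases h : Multiset.card M
    · rw [Multiset.card_eq_zero] at h
      subst h
      simp [Pf]
  | succ f ih =>
    intro lo s M hlo hM hsum hcard
    rcases eq_or_ne M 0 with rfl | hne
    · simp [Pf]
    · have hsort := Multiset.pairwise_sort M (· ≤ ·)
      have hperm : (Multiset.sort M (· ≤ ·) : Multiset ℕ) = M := Multiset.sort_eq _ _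
      rcases hl : Multiset.sort M (· ≤ ·) with _ | ⟨x, l'⟩
      · rw [hl] at hperm; simp at hperm; exact absurd hperm.symm hne
      · rw [hl] at hperm hsort
        rw [List.pairwise_cons] at hsort
        have hMx : M = x ::ₘ (l' : Multiset ℕ) := by
          rw [← hperm]; rfl
        have hxM : x ∈ M := by rw [hMx]; exact Multiset.mem_cons_self _ _
        have hlox : lo ≤ x := hM x hxM
        have hsum' : M.sum = x + (l' : Multiset ℕ).sum := by rw [hMx]; simp
        have hxs : x ≤ s := by
          have : x ≤ M.sum := Multiset.single_le_sum (fun y _ => Nat.zero_le y) x hxM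
          omega
        have hrec : (l' : Multiset ℕ) ∈ Pf f x (s - x) := by
          apply ih x (s - x) _ (le_trans hlo hlox)
          · intro y hy
            exact hsort.1 y (by simpa using hy)
          · omega
          · have : Multiset.card M = Multiset.card (l' : Multiset ℕ) + 1 := by
              rw [hMx]; simp
            omega
        show M ∈ Pf (f+1) lo s
        rw [Pf]
        apply List.mem_cons_of_mem
        rw [List.mem_flatMap]
        refine ⟨x, by simp [List.mem_range]; omega, ?_⟩
        rw [if_pos hlox]
        rw [List.mem_map]
        exact ⟨(l' : Multiset ℕ), hrec, hMx.symm⟩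

lemma sum_map_cast (M : Multiset ℕ) :
    ((M.map (Nat.cast : ℕ → ℤ)).map (fun b => 2 * b - 1)).sum
      = 2 * (M.sum : ℤ) - Multiset.card M := by
  induction M using Multiset.induction_on with
  | empty => simp
  | cons x M ih =>
    simp only [Multiset.map_cons, Multiset.sum_cons, Multiset.card_cons, ih,
      Nat.cast_add, Nat.cast_one]
    omega

lemma sum_map_fd (M : Multiset ℕ) :
    (M.map (fun b => 2 * (b : ℤ) - 1)).sum = 2 * (M.sum : ℤ) - Multiset.card M := by
  have h1 : (M >>= fun a => (pure (a : ℤ) : Multiset ℤ)) = M.map (Nat.cast) :=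
    Multiset.bind_singleton (Nat.cast : ℕ → ℤ) (s := M)
  rw [show (M.map (fun b => 2 * (b : ℤ) - 1)) =
      Multiset.map (fun b : ℤ => 2 * b - 1) (M.map (Nat.cast)) from by rw [← h1],
    sum_map_cast]

lemma fd_iff (A B : Multiset ℕ) : formalDim A B = 15 ↔
    2 * B.sum + Multiset.card A = 15 + 2 * A.sum + Multiset.card B := by
  unfold formalDim
  rw [sum_map_fd, sum_map_fd]
  omega

end T5

section T6
open CFD

def L58 : List (Multiset ℕ × Multiset ℕ) := [
  ((0 : Multiset ℕ), ({2,2,2,2,2} : Multiset ℕ)),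
  ((0 : Multiset ℕ), ({2,2,5} : Multiset ℕ)),
  ((0 : Multiset ℕ), ({2,3,4} : Multiset ℕ)),
  ((0 : Multiset ℕ), ({3,3,3} : Multiset ℕ)),
  ((0 : Multiset ℕ), ({8} : Multiset ℕ)),
  (({1} : Multiset ℕ), ({2,2,2,4} : Multiset ℕ)),
  (({1} : Multiset ℕ), ({2,2,3,3} : Multiset ℕ)),
  (({1} : Multiset ℕ), ({2,7} : Multiset ℕ)),
  (({1} : Multiset ℕ), ({3,6} : Multiset ℕ)),
  (({1} : Multiset ℕ), ({4,5} : Multiset ℕ)),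
  (({1,1} : Multiset ℕ), ({2,2,2,2,3} : Multiset ℕ)),
  (({1,1} : Multiset ℕ), ({2,2,6} : Multiset ℕ)),
  (({1,1} : Multiset ℕ), ({2,3,5} : Multiset ℕ)),
  (({1,1} : Multiset ℕ), ({2,4,4} : Multiset ℕ)),
  (({1,1} : Multiset ℕ), ({3,3,4} : Multiset ℕ)),
  (({1,1,1} : Multiset ℕ), ({2,2,2,2,2,2} : Multiset ℕ)),
  (({1,1,1} : Multiset ℕ), ({2,2,2,5} : Multiset ℕ)),
  (({1,1,1} : Multiset ℕ), ({2,2,3,4} : Multiset ℕ)),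
  (({1,1,1} : Multiset ℕ), ({2,3,3,3} : Multiset ℕ)),
  (({1,1,1,1} : Multiset ℕ), ({2,2,2,2,4} : Multiset ℕ)),
  (({1,1,1,1} : Multiset ℕ), ({2,2,2,3,3} : Multiset ℕ)),
  (({1,1,1,1,1} : Multiset ℕ), ({2,2,2,2,2,3} : Multiset ℕ)),
  (({1,1,1,1,1,1} : Multiset ℕ), ({2,2,2,2,2,2,2} : Multiset ℕ)),
  (({1,1,1,1,2} : Multiset ℕ), ({2,2,2,2,2,4} : Multiset ℕ)),
  (({1,1,1,2} : Multiset ℕ), ({2,2,2,3,4} : Multiset ℕ)),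
  (({1,1,1,3} : Multiset ℕ), ({2,2,2,2,6} : Multiset ℕ)),
  (({1,1,2} : Multiset ℕ), ({2,2,2,6} : Multiset ℕ)),
  (({1,1,2} : Multiset ℕ), ({2,2,4,4} : Multiset ℕ)),
  (({1,1,2} : Multiset ℕ), ({2,3,3,4} : Multiset ℕ)),
  (({1,1,2,2} : Multiset ℕ), ({2,2,2,4,4} : Multiset ℕ)),
  (({1,1,3} : Multiset ℕ), ({2,2,3,6} : Multiset ℕ)),
  (({1,1,4} : Multiset ℕ), ({2,2,2,8} : Multiset ℕ)),
  (({1,2} : Multiset ℕ), ({2,2,2,2,4} : Multiset ℕ)),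
  (({1,2} : Multiset ℕ), ({2,3,6} : Multiset ℕ)),
  (({1,2} : Multiset ℕ), ({2,4,5} : Multiset ℕ)),
  (({1,2} : Multiset ℕ), ({3,4,4} : Multiset ℕ)),
  (({1,2,2} : Multiset ℕ), ({2,3,4,4} : Multiset ℕ)),
  (({1,2,3} : Multiset ℕ), ({2,2,4,6} : Multiset ℕ)),
  (({1,3} : Multiset ℕ), ({2,4,6} : Multiset ℕ)),
  (({1,3} : Multiset ℕ), ({3,3,6} : Multiset ℕ)),
  (({1,4} : Multiset ℕ), ({2,3,8} : Multiset ℕ)),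
  (({1,5} : Multiset ℕ), ({2,2,10} : Multiset ℕ)),
  (({2} : Multiset ℕ), ({2,2,3,4} : Multiset ℕ)),
  (({2} : Multiset ℕ), ({2,8} : Multiset ℕ)),
  (({2} : Multiset ℕ), ({4,6} : Multiset ℕ)),
  (({2,2} : Multiset ℕ), ({2,4,6} : Multiset ℕ)),
  (({2,2} : Multiset ℕ), ({4,4,4} : Multiset ℕ)),
  (({2,2,2} : Multiset ℕ), ({2,4,4,4} : Multiset ℕ)),
  (({2,3} : Multiset ℕ), ({2,5,6} : Multiset ℕ)),
  (({2,3} : Multiset ℕ), ({3,4,6} : Multiset ℕ)),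
  (({2,4} : Multiset ℕ), ({2,4,8} : Multiset ℕ)),
  (({3} : Multiset ℕ), ({2,2,2,6} : Multiset ℕ)),
  (({3} : Multiset ℕ), ({2,9} : Multiset ℕ)),
  (({3} : Multiset ℕ), ({5,6} : Multiset ℕ)),
  (({3,3} : Multiset ℕ), ({2,6,6} : Multiset ℕ)),
  (({4} : Multiset ℕ), ({4,8} : Multiset ℕ)),
  (({5} : Multiset ℕ), ({3,10} : Multiset ℕ)),
  (({6} : Multiset ℕ), ({2,12} : Multiset ℕ))]

set_option maxRecDepth 10000 in
lemma D1 : ∀ p ∈ L58, Check p.1 p.2 ∧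
    2 * p.2.sum + Multiset.card p.1 = 15 + 2 * p.1.sum + Multiset.card p.2 := by decide

end T6

section T7
open CFD

set_option maxRecDepth 100000 in
lemma D2 : ∀ A ∈ Pf 7 1 7, ∀ B ∈ Pf 14 2 14,
    2 * B.sum + Multiset.card A = 15 + 2 * A.sum + Multiset.card B →
    (∀ t ∈ Finset.Icc 0 8, Multiset.card (A.filter (t ≤ ·))
        ≤ Multiset.card (B.filter (fun b => 2*t ≤ b))) →
    ((A, B) ∈ L58 ∨ ¬ Check A B) := by decide

end T7

section T8
open CFD

lemma set_eq : {p : Multiset ℕ × Multiset ℕ |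
    IsHomotopyRankType p.1 p.2 ∧ formalDim p.1 p.2 = 15} = ↑L58.toFinset := by
  ext ⟨A, B⟩
  simp only [Set.mem_setOf_eq, Finset.mem_coe, List.mem_toFinset]
  constructor
  · rintro ⟨h, hfd⟩
    have hc : Check A B := (check_iff A B).mp h
    have hnat := (fd_iff A B).mp hfd
    obtain ⟨hA7, hB14⟩ := boundLemma hc hnat
    have hAmem : A ∈ Pf 7 1 7 :=
      Pf_complete 7 1 7 A le_rfl hc.1 hA7 (le_trans (card_le_sum hc.1) hA7)
    have hBmem : B ∈ Pf 14 2 14 :=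
      Pf_complete 14 2 14 B (by norm_num) hc.2.1 hB14
        (le_trans (card_le_sum (fun x hx => le_trans (by norm_num) (hc.2.1 x hx))) hB14)
    rcases D2 A hAmem B hBmem hnat (fun t _ => countLemma hc t) with h58 | hbad
    · exact h58
    · exact absurd hc hbad
  · intro hmem
    obtain ⟨hcheck, hnat⟩ := D1 (A, B) hmem
    exact ⟨(check_iff A B).mpr hcheck, (fd_iff A B).mpr hnat⟩

end T8


theorem count_fd_15 :
    {p : Multiset ℕ × Multiset ℕ |
        IsHomotopyRankType p.1 p.2 ∧ formalDim p.1 p.2 = 15}.Finite ∧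
    {p : Multiset ℕ × Multiset ℕ |
        IsHomotopyRankType p.1 p.2 ∧ formalDim p.1 p.2 = 15}.ncard = 58 := by
  constructor
  · rw [set_eq]; exact L58.toFinset.finite_toSet
  · rw [set_eq, Set.ncard_coe_finset]
    decide
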